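/- (Local discrete upper bound, abstract form of the first inequality of Lemma 3.1 for zero order operators.) Let S ⊆ S′ be closed subspaces of H = L²(X, μ), and let E ⊆ X be a measurable set such that for every e ∈ S′, the function e − P_S e vanishes μ-almost everywhere outside E, where P_S is the orthogonal projection onto S. Let u_S and u_{S′} be the Galerkin approximations from S and S′ of the solution of Au = f. Then α ‖u_S − u_{S′}‖ ≤ ‖r_S‖_E, where r_S = f − A u_S. -/

import Mathlib

open MeasureTheory
open scoped RealInnerProductSpace ENNReal

/-- Local discrete upper bound (abstract form of the first inequality of Lemma 3.1
for zero order operators): if every `e ∈ S'` satisfies `e - P_S e = 0` a.e. outside `E`,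
then `α ‖u_S − u_{S'}‖ ≤ ‖r_S‖_E`, where `r_S = f − A u_S` and
`‖g‖_E = (∫_E g² dμ)^{1/2}`. -/
theorem local_discrete_upper_bound_zero_order
    {X : Type*} [MeasurableSpace X] (μ : Measure X)
    (A : Lp ℝ 2 μ →L[ℝ] Lp ℝ 2 μ) (α β : ℝ) (hα : 0 < α) (hαβ : α ≤ β)
    (hsym : ∀ v w : Lp ℝ 2 μ, ⟪A v, w⟫ = ⟪v, A w⟫)
    (hcoer : ∀ v : Lp ℝ 2 μ, α * ‖v‖ ^ 2 ≤ ⟪A v, v⟫)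
    (hbdd : ∀ v : Lp ℝ 2 μ, ‖A v‖ ≤ β * ‖v‖)
    (f u : Lp ℝ 2 μ) (hu : A u = f)
    (S S' : Submodule ℝ (Lp ℝ 2 μ)) [CompleteSpace S] [CompleteSpace S'] (hSS' : S ≤ S')
    (E : Set X) (hE : MeasurableSet E)
    (hloc : ∀ e : Lp ℝ 2 μ, e ∈ S' →
      ∀ᵐ x ∂μ, x ∉ E → (e - ((Submodule.orthogonalProjectionOnto S e : S) : Lp ℝ 2 μ)) x = 0)
    (uS uS' : Lp ℝ 2 μ) (huS : uS ∈ S) (huS' : uS' ∈ S')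
    (hGalS : ∀ v ∈ S, ⟪A uS, v⟫ = ⟪f, v⟫)
    (hGalS' : ∀ v ∈ S', ⟪A uS', v⟫ = ⟪f, v⟫) :
    α * ‖uS - uS'‖ ≤ Real.sqrt (∫ x in E, ((f - A uS : Lp ℝ 2 μ) x) ^ 2 ∂μ) := by
  set r : Lp ℝ 2 μ := f - A uS with hr
  set e : Lp ℝ 2 μ := uS' - uS with he
  have heS' : e ∈ S' := S'.sub_mem huS' (hSS' huS)
  set p : Lp ℝ 2 μ := ((Submodule.orthogonalProjectionOnto S e : S) : Lp ℝ 2 μ) with hp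
  set w : Lp ℝ 2 μ := e - p with hw
  have hpS : p ∈ S := (Submodule.orthogonalProjectionOnto S e).2
  have hres : ∀ v ∈ S, ⟪r, v⟫ = 0 := by
    intro v hv
    rw [hr, inner_sub_left, hGalS v hv]; ring
  have h1 : ⟪A e, e⟫ = ⟪r, e⟫ := by
    rw [he, map_sub, inner_sub_left, hGalS' _ heS', hr, inner_sub_left]
  have h2 : ⟪r, e⟫ = ⟪r, w⟫ := by
    have h := inner_sub_right (𝕜 := ℝ) r e p
    rw [hres p hpS, sub_zero] at h
    exact h.symm
  have hmem : MemLp (E.indicator (⇑r)) 2 μ := (Lp.memLp r).indicator hE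
  set g : Lp ℝ 2 μ := hmem.toLp _ with hg
  have hgae : ⇑g =ᵐ[μ] E.indicator (⇑r) := hmem.coeFn_toLp
  have hwloc : ∀ᵐ x ∂μ, x ∉ E → w x = 0 := hloc e heS'
  have h3 : ⟪r, w⟫ = ⟪g, w⟫ := by
    rw [MeasureTheory.L2.inner_def, MeasureTheory.L2.inner_def]
    apply integral_congr_ae
    filter_upwards [hgae, hwloc] with x hgx hx
    by_cases hxE : x ∈ E
    · rw [hgx, Set.indicator_of_mem hxE]
    · rw [hx hxE]; simp
  have h5 : ‖w‖ ≤ ‖e‖ := by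
    have horth : ⟪p, w⟫ = 0 := by
      have hmem' : w ∈ Sᗮ := Submodule.sub_starProjection_mem_orthogonal (K := S) e
      exact (Submodule.mem_orthogonal S w).mp hmem' p hpS
    have hsum : w + p = e := by rw [hw]; abel
    have : ‖e‖ ^ 2 = ‖w‖ ^ 2 + 2 * ⟪w, p⟫ + ‖p‖ ^ 2 := by
      rw [← hsum, norm_add_sq_real]
    rw [real_inner_comm, horth] at this
    nlinarith [norm_nonneg w, norm_nonneg e, norm_nonneg p]
  have hgg : ⟪g, g⟫ = ∫ x in E, (r x) ^ 2 ∂μ := by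
    rw [MeasureTheory.L2.inner_def, ← integral_indicator hE]
    apply integral_congr_ae
    filter_upwards [hgae] with x hgx
    rw [hgx]
    by_cases hxE : x ∈ E <;>
      simp [Set.indicator_of_mem, Set.indicator_of_notMem, hxE, sq]
  have hgnorm : Real.sqrt (∫ x in E, (r x) ^ 2 ∂μ) = ‖g‖ := by
    rw [← hgg, real_inner_self_eq_norm_sq, Real.sqrt_sq (norm_nonneg g)]
  have key : α * ‖e‖ ^ 2 ≤ ‖g‖ * ‖e‖ := by
    calc α * ‖e‖ ^ 2 ≤ ⟪A e, e⟫ := hcoer e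
      _ = ⟪g, w⟫ := by rw [h1, h2, h3]
      _ ≤ ‖g‖ * ‖w‖ := real_inner_le_norm g w
      _ ≤ ‖g‖ * ‖e‖ := mul_le_mul_of_nonneg_left h5 (norm_nonneg g)
  have hnorm_eq : ‖uS - uS'‖ = ‖e‖ := by rw [he, norm_sub_rev]
  rw [hnorm_eq, hgnorm]
  rcases eq_or_lt_of_le (norm_nonneg e) with h0 | h0
  · rw [← h0, mul_zero]; exact norm_nonneg g
  · nlinarith
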